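/- The linear system (1 + λ_i) s_i - (1/(n-1)) Σ_{j≠i} s_j = λ_i ŝ_i for i = 1, …, n has a unique solution s* ∈ ℝ^n, for every choice of raw scores ŝ ∈ ℝ^n and parameters λ_i > 0. -/

import Mathlib

/-- the linear equilibrium system has a unique solution. -/
theorem stmt3 (n : ℕ) (hn : 2 ≤ n) (lam shat : Fin n → ℝ) (hlam : ∀ i, 0 < lam i) :
    ∃! s : Fin n → ℝ, ∀ i : Fin n,
      (1 + lam i) * s i - (∑ j ∈ Finset.univ.erase i, s j) / ((n : ℝ) - 1)
        = lam i * shat i := by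
  haveI : Nonempty (Fin n) := ⟨⟨0, by omega⟩⟩
  set N : ℝ := (n : ℝ) - 1 with hNdef
  have hn2 : (2 : ℝ) ≤ (n : ℝ) := by exact_mod_cast hn
  have hN : 0 < N := by simp only [hNdef]; linarith
  have hNne : N ≠ 0 := ne_of_gt hN
  have hnpos : (0 : ℝ) < n := by linarith
  set c : Fin n → ℝ := fun i => 1 + lam i + 1 / N with hcdef
  have hceq : ∀ i, c i = 1 + lam i + 1 / N := fun i => rfl
  have hc : ∀ i, 0 < c i := fun i => by
    have h1 : 0 < 1 / N := by positivity
    have := hlam i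
    rw [hceq i]; linarith
  have hcne : ∀ i, c i ≠ 0 := fun i => ne_of_gt (hc i)
  have hclb : ∀ i, (n : ℝ) / N < c i := by
    intro i
    have h0 : (n : ℝ) / N = 1 + 1 / N := by
      rw [hNdef, eq_comm, one_add_div (ne_of_gt (by linarith))]; ring
    rw [h0, hceq i]; have := hlam i; linarith
  set K : ℝ := ∑ i, 1 / c i with hKdef
  have hK : K < N := by
    have h1 : ∀ i ∈ (Finset.univ : Finset (Fin n)), 1 / c i < N / (n : ℝ) := by
      intro i _
      rw [div_lt_div_iff₀ (hc i) hnpos]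
      have h := (div_lt_iff₀ hN).mp (hclb i)
      linarith [mul_comm N (c i)]
    calc K < ∑ _i : Fin n, N / (n : ℝ) :=
          Finset.sum_lt_sum_of_nonempty Finset.univ_nonempty h1
      _ = (n : ℝ) * (N / n) := by rw [Finset.sum_const, Finset.card_univ,
            Fintype.card_fin, nsmul_eq_mul]
      _ = N := by field_simp
  set D : ℝ := 1 - K / N with hDdef
  have hD : 0 < D := by
    have : K / N < 1 := (div_lt_one hN).mpr hK
    simp only [hDdef]; linarith
  have hDne : D ≠ 0 := ne_of_gt hD
  set S : ℝ := (∑ i, lam i * shat i / c i) / D with hSdef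
  have hSeq : S * D = ∑ i, lam i * shat i / c i := by
    rw [hSdef]; field_simp
  clear_value S
  clear hSdef
  set s : Fin n → ℝ := fun i => (lam i * shat i + S / N) / c i with hsdef
  have hs : ∀ i, s i = (lam i * shat i + S / N) / c i := fun i => rfl
  clear_value s
  clear hsdef
  -- sum of s equals S
  have hsum : ∑ i, s i = S := by
    have h1 : ∑ i, s i = (∑ i, lam i * shat i / c i) + (S / N) * K := by
      rw [hKdef, Finset.mul_sum, ← Finset.sum_add_distrib]
      refine Finset.sum_congr rfl fun i _ => ?_
      rw [hs i]
      field_simp [hcne i]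
    rw [h1, ← hSeq, hDdef]
    field_simp
    ring
  have key : ∀ (t : Fin n → ℝ),
      (∀ i, (1 + lam i) * t i - (∑ j ∈ Finset.univ.erase i, t j) / N = lam i * shat i)
      ↔ (∀ i, c i * t i = lam i * shat i + (∑ j, t j) / N) := by
    intro t
    have herase : ∀ i : Fin n, ∑ j ∈ Finset.univ.erase i, t j = (∑ j, t j) - t i :=
      fun i => Finset.sum_erase_eq_sub (Finset.mem_univ i)
    constructor
    · intro h i
      have h0 := h i
      rw [herase i] at h0
      rw [hceq i]
      field_simp at h0 ⊢
      linarith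
    · intro h i
      have h0 := h i
      rw [hceq i] at h0
      rw [herase i]
      field_simp at h0 ⊢
      linarith
  refine ⟨s, ?_, ?_⟩
  · refine (key s).mpr ?_
    intro i
    rw [hsum, hs i, mul_div_cancel₀ _ (hcne i)]
  · intro t ht
    replace ht := (key t).mp ht
    set T : ℝ := ∑ j, t j with hTdef
    have ht' : ∀ i, t i = (lam i * shat i + T / N) / c i := by
      intro i
      rw [eq_div_iff (hcne i)]
      linarith [ht i, mul_comm (c i) (t i), mul_comm (t i) (c i)]
    have hTsum : T = (∑ i, lam i * shat i / c i) + (T / N) * K := by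
      calc T = ∑ i, t i := hTdef
        _ = ∑ i, (lam i * shat i + T / N) / c i :=
            Finset.sum_congr rfl fun i _ => ht' i
        _ = (∑ i, lam i * shat i / c i) + (T / N) * K := by
            rw [hKdef, Finset.mul_sum, ← Finset.sum_add_distrib]
            refine Finset.sum_congr rfl fun i _ => ?_
            field_simp [hcne i]
    have hS' : S = (∑ i, lam i * shat i / c i) + (S / N) * K := by
      rw [← hSeq, hDdef]; field_simp; ring
    set Q : ℝ := ∑ i, lam i * shat i / c i with hQdef
    have hT0 : T * N = Q * N + T * K := by
      have h0 := hTsum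
      field_simp at h0
      linarith
    have hS0 : S * N = Q * N + S * K := by
      have h0 := hS'
      field_simp at h0
      linarith
    have h2 : (T - S) * (N - K) = 0 := by linear_combination hT0 - hS0
    have hTS : T = S := by
      rcases mul_eq_zero.mp h2 with h | h
      · linarith
      · exfalso; linarith
    funext i
    rw [ht' i, hTS, hs i]
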